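/- (Minty's lemma for the cell problem.) Let ξ ∈ M and η ∈ S, and suppose that ∫_Ω A(ω, ξ + ζ(ω))·(η(ω) − ζ(ω)) dP(ω) ≤ 0 for every ζ ∈ S. Then η solves the cell problem: ∫_Ω A(ω, ξ + η(ω))·θ(ω) dP(ω) = 0 for every θ ∈ S. -/

import Mathlib

open MeasureTheory ENNReal
open scoped RealInnerProductSpace

/-- `Md d`: the space of symmetric `d × d` real matrices, identified (as in the paper)
with the Euclidean space `ℝ^{d(d+1)/2}`. -/
abbrev Md (d : ℕ) : Type := EuclideanSpace ℝ (Fin (d * (d + 1) / 2))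


private lemma measurable_rpow_of_nonneg {Ω : Type*} [MeasurableSpace Ω] {f g : Ω → ℝ}
    (hf : Measurable f) (hg : Measurable g) (h0 : ∀ x, 0 ≤ f x) :
    Measurable fun x => f x ^ g x := by
  have heq : (fun x => f x ^ g x) = fun x =>
      if f x = 0 then (if g x = 0 then 1 else 0) else Real.exp (Real.log (f x) * g x) := by
    funext x
    rcases eq_or_lt_of_le (h0 x) with h | h
    · rw [if_pos h.symm, ← h]
      by_cases hgx : g x = 0
      · rw [if_pos hgx, hgx, Real.rpow_zero]
      · rw [if_neg hgx, Real.zero_rpow hgx]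
    · rw [if_neg h.ne', Real.rpow_def_of_pos h]
  rw [heq]
  refine Measurable.ite (hf (measurableSet_singleton 0)) ?_ ?_
  · exact Measurable.ite (hg (measurableSet_singleton 0)) measurable_const measurable_const
  · exact Real.measurable_exp.comp ((Real.measurable_log.comp hf).mul hg)

/-- Minty's lemma for the cell problem: if `η ∈ S` satisfies
`∫_Ω A(ω, ξ + ζ(ω))·(η(ω) − ζ(ω)) dP ≤ 0` for every `ζ ∈ S`, then
`∫_Ω A(ω, ξ + η(ω))·θ(ω) dP = 0` for every `θ ∈ S`. -/
theorem stmt5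
    {d : ℕ} (hd : 1 ≤ d)
    {Ω : Type*} [MeasurableSpace Ω] (P : Measure Ω) [IsProbabilityMeasure P]
    (p : Ω → ℝ) (hp : Measurable p)
    (α β : ℝ) (hα : 1 < α) (hαp : ∀ ω, α ≤ p ω) (hpβ : ∀ ω, p ω ≤ β)
    (A : Ω → Md d → Md d)
    (hAmeas : ∀ ξ : Md d, Measurable (fun ω => A ω ξ))
    (hAcont : ∀ ω, Continuous (A ω))
    (hAmono : ∀ ω (ξ₁ ξ₂ : Md d), ξ₁ ≠ ξ₂ → 0 < ⟪A ω ξ₁ - A ω ξ₂, ξ₁ - ξ₂⟫)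
    (c₁ : ℝ) (hc₁ : 0 < c₁)
    (hAgrowth : ∀ ω (ξ : Md d), ‖A ω ξ‖ ^ (p ω / (p ω - 1)) ≤ c₁ * ‖ξ‖ ^ p ω + c₁)
    -- `S` is a linear subspace of the measurable functions `Ω → M` with finite
    -- `p(⬝)`-integral and zero mean:
    (S : Set (Ω → Md d))
    (hSmeas : ∀ w ∈ S, Measurable w)
    (hSfin : ∀ w ∈ S, ∫⁻ ω, ENNReal.ofReal (‖w ω‖ ^ p ω) ∂P < ⊤)
    (hSzero : (0 : Ω → Md d) ∈ S)
    (hSadd : ∀ w₁ ∈ S, ∀ w₂ ∈ S, w₁ + w₂ ∈ S)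
    (hSsmul : ∀ (r : ℝ), ∀ w ∈ S, r • w ∈ S)
    (hSmean : ∀ w ∈ S, ∫ ω, w ω ∂P = 0)
    (ξ : Md d) (η : Ω → Md d) (hη : η ∈ S)
    (hminty : ∀ ζ ∈ S, ∫ ω, ⟪A ω (ξ + ζ ω), η ω - ζ ω⟫ ∂P ≤ 0) :
    ∀ θ ∈ S, ∫ ω, ⟪A ω (ξ + η ω), θ ω⟫ ∂P = 0 := by
  intro θ hθ
  -- joint measurability of Carathéodory function A
  have hAjoint : Measurable (Function.uncurry (fun ζ : Md d => fun ω => A ω ζ)) :=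
    measurable_uncurry_of_continuous_of_measurable (fun ω => hAcont ω) (fun ζ => hAmeas ζ)
  have hAcomp : ∀ {h : Ω → Md d}, Measurable h → Measurable (fun ω => A ω (h ω)) := by
    intro h hh
    exact hAjoint.comp (hh.prodMk measurable_id)
  -- integrability of ‖w‖^p for w ∈ S
  have hint : ∀ w ∈ S, Integrable (fun ω => ‖w ω‖ ^ p ω) P := by
    intro w hw
    have hm : Measurable fun ω => ‖w ω‖ ^ p ω := measurable_rpow_of_nonneg (hSmeas w hw).norm hp fun _ => norm_nonneg _
    refine ⟨hm.aestronglyMeasurable, ?_⟩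
    rw [hasFiniteIntegral_iff_ofReal
        (Filter.Eventually.of_forall fun ω => Real.rpow_nonneg (norm_nonneg _) _)]
    exact hSfin w hw
  -- the dominating function
  set D : Ω → ℝ := fun ω =>
    c₁ * (3:ℝ) ^ β * ((max 1 ‖ξ‖) ^ β + ‖η ω‖ ^ p ω + ‖θ ω‖ ^ p ω) + c₁ + ‖θ ω‖ ^ p ω with hD_def
  have hD : Integrable D P := by
    refine Integrable.add (Integrable.add ?_ (integrable_const c₁)) (hint θ hθ)
    exact (((integrable_const ((max 1 ‖ξ‖) ^ β)).add (hint η hη)).add (hint θ hθ)).const_mul _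
  -- pointwise domination
  have hbound : ∀ t : ℝ, |t| ≤ 1 → ∀ ω,
      ‖⟪A ω (ξ + (η ω + t • θ ω)), θ ω⟫‖ ≤ D ω := by
    intro t ht ω
    have hq : 1 < p ω := lt_of_lt_of_le hα (hαp ω)
    have hq0 : 0 < p ω := lt_trans one_pos hq
    have hpq : (p ω / (p ω - 1)).HolderConjugate (p ω) :=
      (Real.HolderConjugate.conjExponent hq).symm
    set z : Md d := ξ + (η ω + t • θ ω) with hz
    have h1 : ‖⟪A ω z, θ ω⟫‖ ≤ ‖A ω z‖ * ‖θ ω‖ := by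
      rw [Real.norm_eq_abs]; exact abs_real_inner_le_norm _ _
    have h2 : ‖A ω z‖ * ‖θ ω‖ ≤
        ‖A ω z‖ ^ (p ω / (p ω - 1)) / (p ω / (p ω - 1)) + ‖θ ω‖ ^ p ω / p ω :=
      Real.young_inequality_of_nonneg (norm_nonneg _) (norm_nonneg _) hpq
    have h3 : ‖A ω z‖ ^ (p ω / (p ω - 1)) / (p ω / (p ω - 1)) + ‖θ ω‖ ^ p ω / p ω ≤
        ‖A ω z‖ ^ (p ω / (p ω - 1)) + ‖θ ω‖ ^ p ω :=
      add_le_add (div_le_self (Real.rpow_nonneg (norm_nonneg _) _) hpq.lt.le)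
        (div_le_self (Real.rpow_nonneg (norm_nonneg _) _) hq.le)
    have h4 : ‖A ω z‖ ^ (p ω / (p ω - 1)) ≤ c₁ * ‖z‖ ^ p ω + c₁ := hAgrowth ω z
    -- bound ‖z‖^p
    set a : ℝ := ‖ξ‖
    set b : ℝ := ‖η ω‖
    set c : ℝ := ‖θ ω‖
    have ha : 0 ≤ a := norm_nonneg _
    have hb : 0 ≤ b := norm_nonneg _
    have hc : 0 ≤ c := norm_nonneg _
    have htri : ‖z‖ ≤ a + b + c := by
      calc ‖z‖ ≤ ‖ξ‖ + ‖η ω + t • θ ω‖ := norm_add_le _ _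
        _ ≤ ‖ξ‖ + (‖η ω‖ + ‖t • θ ω‖) := by
            exact add_le_add_right (norm_add_le _ _) _
        _ ≤ a + b + c := by
            rw [norm_smul, ← add_assoc]
            refine add_le_add_right ?_ _
            calc ‖t‖ * ‖θ ω‖ ≤ 1 * ‖θ ω‖ := by
                  exact mul_le_mul_of_nonneg_right (by simpa using ht) (norm_nonneg _)
              _ = c := one_mul _
    set m : ℝ := max a (max b c) with hm_def
    have hm0 : 0 ≤ m := le_trans ha (le_max_left _ _)
    have hsum : a + b + c ≤ 3 * m := by
      have h1 : a ≤ m := le_max_left _ _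
      have h2 : b ≤ m := le_trans (le_max_left _ _) (le_max_right _ _)
      have h3 : c ≤ m := le_trans (le_max_right _ _) (le_max_right _ _)
      linarith
    have hzp : ‖z‖ ^ p ω ≤ (3:ℝ) ^ p ω * m ^ p ω := by
      calc ‖z‖ ^ p ω ≤ (3 * m) ^ p ω :=
            Real.rpow_le_rpow (norm_nonneg _) (le_trans htri hsum) hq0.le
        _ = (3:ℝ) ^ p ω * m ^ p ω := Real.mul_rpow (by norm_num) hm0
    have h3q : (3:ℝ) ^ p ω ≤ (3:ℝ) ^ β :=
      Real.rpow_le_rpow_of_exponent_le (by norm_num) (hpβ ω)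
    have hmq : m ^ p ω ≤ (max 1 a) ^ β + b ^ p ω + c ^ p ω := by
      have haq : a ^ p ω ≤ (max 1 a) ^ β := by
        calc a ^ p ω ≤ (max 1 a) ^ p ω :=
              Real.rpow_le_rpow ha (le_max_right _ _) hq0.le
          _ ≤ (max 1 a) ^ β :=
              Real.rpow_le_rpow_of_exponent_le (le_max_left _ _) (hpβ ω)
      have hbq : 0 ≤ b ^ p ω := Real.rpow_nonneg hb _
      have hcq : 0 ≤ c ^ p ω := Real.rpow_nonneg hc _
      have haq' : 0 ≤ (max 1 a) ^ β := Real.rpow_nonneg (le_trans zero_le_one (le_max_left _ _)) _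
      rcases max_choice a (max b c) with h | h
      · rw [hm_def, h]; linarith
      · rcases max_choice b c with h' | h'
        · rw [hm_def, h, h']
          have : a ^ p ω ≥ 0 := Real.rpow_nonneg ha _
          linarith [haq]
        · rw [hm_def, h, h']
          linarith [haq]
    have hmain : ‖z‖ ^ p ω ≤ (3:ℝ) ^ β * ((max 1 a) ^ β + b ^ p ω + c ^ p ω) := by
      calc ‖z‖ ^ p ω ≤ (3:ℝ) ^ p ω * m ^ p ω := hzp
        _ ≤ (3:ℝ) ^ β * ((max 1 a) ^ β + b ^ p ω + c ^ p ω) := by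
            apply mul_le_mul h3q hmq (Real.rpow_nonneg hm0 _)
            exact Real.rpow_nonneg (by norm_num) _
    have : ‖⟪A ω z, θ ω⟫‖ ≤ c₁ * ((3:ℝ) ^ β * ((max 1 a) ^ β + b ^ p ω + c ^ p ω)) + c₁ + c ^ p ω := by
      have := mul_le_mul_of_nonneg_left hmain hc₁.le
      linarith [h1, h2, h3, h4]
    simpa [hD_def, mul_assoc] using this
  -- measurability of the integrand
  have hFmeas : ∀ t : ℝ, Measurable (fun ω => ⟪A ω (ξ + (η ω + t • θ ω)), θ ω⟫ : Ω → ℝ) := by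
    intro t
    have h1 : Measurable fun ω => ξ + (η ω + t • θ ω) :=
      measurable_const.add ((hSmeas η hη).add ((hSmeas θ hθ).const_smul t))
    exact (hAcomp h1).inner (hSmeas θ hθ)
  -- pointwise convergence as t → 0
  have hlim : ∀ ω, Filter.Tendsto (fun t : ℝ => ⟪A ω (ξ + (η ω + t • θ ω)), θ ω⟫)
      (nhds 0) (nhds ⟪A ω (ξ + η ω), θ ω⟫) := by
    intro ω
    have hcont : Continuous fun t : ℝ => ⟪A ω (ξ + (η ω + t • θ ω)), θ ω⟫ := by
      exact (((hAcont ω).comp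
        (continuous_const.add (continuous_const.add (continuous_id.smul continuous_const))))).inner
        continuous_const
    have := hcont.tendsto 0
    simpa using this
  -- dominated convergence
  have hconv : Filter.Tendsto (fun t : ℝ => ∫ ω, ⟪A ω (ξ + (η ω + t • θ ω)), θ ω⟫ ∂P)
      (nhdsWithin 0 {(0:ℝ)}ᶜ) (nhds (∫ ω, ⟪A ω (ξ + η ω), θ ω⟫ ∂P)) := by
    refine tendsto_integral_filter_of_dominated_convergence D ?_ ?_ hD ?_
    · exact Filter.Eventually.of_forall fun t => (hFmeas t).aestronglyMeasurable
    · have h1 : ∀ᶠ t : ℝ in nhdsWithin 0 {(0:ℝ)}ᶜ, |t| ≤ 1 := by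
        apply Filter.Eventually.filter_mono nhdsWithin_le_nhds
        filter_upwards [Metric.closedBall_mem_nhds (0:ℝ) one_pos] with t ht
        simpa [Real.dist_eq] using ht
      filter_upwards [h1] with t ht
      exact Filter.Eventually.of_forall (hbound t ht)
    · exact Filter.Eventually.of_forall fun ω => (hlim ω).mono_left nhdsWithin_le_nhds
  -- the sign information from Minty's hypothesis
  have hsign : ∀ t : ℝ, 0 ≤ t * ∫ ω, ⟪A ω (ξ + (η ω + t • θ ω)), θ ω⟫ ∂P := by
    intro t
    have hζ : η + t • θ ∈ S := hSadd η hη _ (hSsmul t θ hθ)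
    have := hminty _ hζ
    have heq : ∀ ω, ⟪A ω (ξ + (η + t • θ) ω), η ω - (η + t • θ) ω⟫
        = (-t) * ⟪A ω (ξ + (η ω + t • θ ω)), θ ω⟫ := by
      intro ω
      have : η ω - (η ω + t • θ ω) = (-t) • θ ω := by
        simp [sub_add_eq_sub_sub, neg_smul]
      simp only [Pi.add_apply, Pi.smul_apply]
      rw [this, real_inner_smul_right]
    rw [show (fun ω => ⟪A ω (ξ + (η + t • θ) ω), η ω - (η + t • θ) ω⟫)
        = fun ω => (-t) * ⟪A ω (ξ + (η ω + t • θ ω)), θ ω⟫ from funext heq] at this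
    rw [integral_const_mul] at this
    nlinarith [this]
  -- conclude: the limit is both ≥ 0 and ≤ 0
  have hge : 0 ≤ ∫ ω, ⟪A ω (ξ + η ω), θ ω⟫ ∂P := by
    have hsub : Set.Ioi (0:ℝ) ⊆ {(0:ℝ)}ᶜ := fun x hx => ne_of_gt hx
    have h := hconv.mono_left (nhdsWithin_mono _ hsub)
    refine ge_of_tendsto h ?_
    filter_upwards [self_mem_nhdsWithin] with t (ht : t ∈ Set.Ioi (0:ℝ))
    have := hsign t
    nlinarith [ht.out]
  have hle : ∫ ω, ⟪A ω (ξ + η ω), θ ω⟫ ∂P ≤ 0 := by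
    have hsub : Set.Iio (0:ℝ) ⊆ {(0:ℝ)}ᶜ := fun x hx => ne_of_lt hx
    have h := hconv.mono_left (nhdsWithin_mono _ hsub)
    refine le_of_tendsto h ?_
    filter_upwards [self_mem_nhdsWithin] with t (ht : t ∈ Set.Iio (0:ℝ))
    have := hsign t
    nlinarith [ht.out]
  linarith
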